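/- Core of Lemma 6.1 (L3) (Hilbert transform of the inverse square root): (i) For every x < 0, the convergent improper integral satisfies ∫_0^∞ s^{−1/2}/(x − s) ds = −π (−x)^{−1/2}. (ii) For every x > 0, lim_{ε→0⁺} ∫_{{s > 0, |s − x| > ε}} s^{−1/2}/(x − s) ds = 0. Consequently, H(s ↦ s₊^{−1/2})(x) = −x₋^{−1/2} for all x ≠ 0, where x₋^{−1/2} equals (−x)^{−1/2} for x < 0 and 0 for x > 0. -/

import Mathlib

open MeasureTheory Real Filter

noncomputable section

open Set Topology

lemma sqrt_tendsto_atTop : Tendsto Real.sqrt atTop atTop := by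
  apply tendsto_atTop_atTop.2
  intro b
  refine ⟨max 0 b ^ 2, fun a ha => ?_⟩
  calc b ≤ max 0 b := le_max_right _ _
    _ ≤ Real.sqrt (max 0 b ^ 2) := by rw [Real.sqrt_sq (le_max_left _ _)]
    _ ≤ Real.sqrt a := Real.sqrt_le_sqrt ha

lemma part1 (x : ℝ) (hx : x < 0) :
    IntegrableOn (fun s : ℝ => (Real.sqrt s)⁻¹ / (x - s)) (Set.Ioi 0) volume ∧
      ∫ s in Set.Ioi (0:ℝ), (Real.sqrt s)⁻¹ / (x - s) = -π * (Real.sqrt (-x))⁻¹ := by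
  set a := Real.sqrt (-x) with ha
  have ha0 : 0 < a := Real.sqrt_pos.2 (by linarith)
  have ha2 : a ^ 2 = -x := Real.sq_sqrt (by linarith)
  set G : ℝ → ℝ := fun s => -(2 / a) * Real.arctan (Real.sqrt s / a) with hG
  have hderiv : ∀ s ∈ Ioi (0:ℝ), HasDerivAt G ((Real.sqrt s)⁻¹ / (x - s)) s := by
    intro s hs
    have hs0 : 0 < s := hs
    have hsq : 0 < Real.sqrt s := Real.sqrt_pos.2 hs0
    have h2 : HasDerivAt (fun t => Real.sqrt t / a) (1 / (2 * Real.sqrt s) / a) s :=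
      (Real.hasDerivAt_sqrt hs0.ne').div_const a
    have h3 := (Real.hasDerivAt_arctan (Real.sqrt s / a)).comp s h2
    have h4 := h3.const_mul (-(2 / a))
    refine h4.congr_deriv ?_
    symm
    have hss : Real.sqrt s ^ 2 = s := Real.sq_sqrt hs0.le
    have hxs : x - s ≠ 0 := by linarith
    have hxa : x = -(a ^ 2) := by linarith
    rw [hxa]
    have h5 : a ^ 2 + s ≠ 0 := by positivity
    have h6 : -a ^ 2 - s ≠ 0 := by nlinarith
    field_simp
    nlinarith [hss]
  have hcont : ContinuousWithinAt G (Ici 0) 0 :=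
    (continuous_const.mul ((Real.continuous_arctan).comp
      (Real.continuous_sqrt.div_const a))).continuousWithinAt
  have hneg : ∀ s ∈ Ioi (0:ℝ), (Real.sqrt s)⁻¹ / (x - s) ≤ 0 := by
    intro s hs
    apply div_nonpos_of_nonneg_of_nonpos (inv_nonneg.2 (Real.sqrt_nonneg s))
    have : (0:ℝ) < s := hs
    linarith
  have htend : Tendsto G atTop (𝓝 (-(2 / a) * (π / 2))) := by
    apply Tendsto.const_mul
    have h1 : Tendsto (fun s => Real.sqrt s / a) atTop atTop :=
      sqrt_tendsto_atTop.atTop_div_const ha0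
    exact (Real.tendsto_arctan_atTop.mono_right nhdsWithin_le_nhds).comp h1
  have hint := integrableOn_Ioi_deriv_of_nonpos hcont hderiv hneg htend
  refine ⟨hint, ?_⟩
  rw [integral_Ioi_of_hasDerivAt_of_nonpos hcont hderiv hneg htend]
  simp only [hG, Real.sqrt_zero, zero_div, Real.arctan_zero, mul_zero, sub_zero]
  field_simp

lemma part2 (x : ℝ) (hx : 0 < x) :
    Tendsto (fun ε : ℝ => ∫ s in {s : ℝ | 0 < s ∧ ε < |s - x|}, (Real.sqrt s)⁻¹ / (x - s))
      (𝓝[>] 0) (𝓝 0) := by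
  set b := Real.sqrt x with hb
  have hb0 : 0 < b := Real.sqrt_pos.2 hx
  have hb2 : b ^ 2 = x := Real.sq_sqrt hx.le
  set F₁ : ℝ → ℝ := fun s => b⁻¹ * (Real.log (b + Real.sqrt s) - Real.log (b - Real.sqrt s))
    with hF₁
  set F₂ : ℝ → ℝ := fun s => b⁻¹ * (Real.log (Real.sqrt s + b) - Real.log (Real.sqrt s - b))
    with hF₂
  have key : ∀ ε ∈ Ioo (0:ℝ) x,
      ∫ s in {s : ℝ | 0 < s ∧ ε < |s - x|}, (Real.sqrt s)⁻¹ / (x - s)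
        = 2 * b⁻¹ * (Real.log (b + Real.sqrt (x - ε)) - Real.log (b + Real.sqrt (x + ε))) := by
    intro ε hε
    obtain ⟨hε0, hεx⟩ := hε
    have hxε0 : 0 < x - ε := by linarith
    -- derivative of F₁ on (0, x-ε)
    have hd1 : ∀ s ∈ Ioo (0:ℝ) (x - ε), HasDerivAt F₁ ((Real.sqrt s)⁻¹ / (x - s)) s := by
      intro s hs
      have hs0 : 0 < s := hs.1
      have hsq : 0 < Real.sqrt s := Real.sqrt_pos.2 hs0
      have hub : Real.sqrt s < b := by
        rw [hb]; exact Real.sqrt_lt_sqrt hs0.le (by linarith [hs.2])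
      have h1 : HasDerivAt (fun t => b + Real.sqrt t) (1 / (2 * Real.sqrt s)) s :=
        (Real.hasDerivAt_sqrt hs0.ne').const_add b
      have hl1 : HasDerivAt (fun t => Real.log (b + Real.sqrt t))
          ((b + Real.sqrt s)⁻¹ * (1 / (2 * Real.sqrt s))) s :=
        (Real.hasDerivAt_log (by positivity)).comp s h1
      have h2 : HasDerivAt (fun t => b - Real.sqrt t) (-(1 / (2 * Real.sqrt s))) s :=
        (Real.hasDerivAt_sqrt hs0.ne').const_sub b
      have hl2 : HasDerivAt (fun t => Real.log (b - Real.sqrt t))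
          ((b - Real.sqrt s)⁻¹ * -(1 / (2 * Real.sqrt s))) s :=
        (Real.hasDerivAt_log (by linarith)).comp s h2
      have h4 := (hl1.sub hl2).const_mul b⁻¹
      refine h4.congr_deriv ?_
      symm
      have hss : Real.sqrt s ^ 2 = s := Real.sq_sqrt hs0.le
      have hxs : x - s ≠ 0 := by nlinarith [hs.2]
      have hbu : b - Real.sqrt s ≠ 0 := by linarith
      have hbu2 : b + Real.sqrt s ≠ 0 := by positivity
      field_simp
      linear_combination (2*b) * hb2 - (2*b) * hss
    have hcont1 : ContinuousOn F₁ (Icc 0 (x - ε)) := by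
      apply ContinuousOn.mul continuousOn_const
      apply ContinuousOn.sub
      · apply ContinuousOn.log ((continuous_const.add Real.continuous_sqrt).continuousOn)
        intro s hs
        have := Real.sqrt_nonneg s
        show b + Real.sqrt s ≠ 0
        positivity
      · apply ContinuousOn.log ((continuous_const.sub Real.continuous_sqrt).continuousOn)
        intro s hs
        have : Real.sqrt s < b := by
          rcases eq_or_lt_of_le hs.1 with h | h
          · rw [← h]; simpa using hb0
          · rw [hb]; exact Real.sqrt_lt_sqrt hs.1 (by linarith [hs.2])
        -- need ≤ version: sqrt s ≤ sqrt (x-ε) < sqrt x = b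
        show b - Real.sqrt s ≠ 0
        linarith
    have hpos1 : ∀ s ∈ Ioo (0:ℝ) (x - ε), 0 ≤ (Real.sqrt s)⁻¹ / (x - s) := by
      intro s hs
      apply div_nonneg (inv_nonneg.2 (Real.sqrt_nonneg s))
      nlinarith [hs.2]
    have hint1 : IntegrableOn (fun s => (Real.sqrt s)⁻¹ / (x - s)) (Ioc 0 (x - ε)) :=
      intervalIntegral.integrableOn_deriv_of_nonneg hcont1 hd1 hpos1
    have hval1 : ∫ s in Set.Ioo (0:ℝ) (x - ε), (Real.sqrt s)⁻¹ / (x - s)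
        = F₁ (x - ε) - F₁ 0 := by
      rw [← integral_Ioc_eq_integral_Ioo, ← intervalIntegral.integral_of_le hxε0.le]
      exact intervalIntegral.integral_eq_sub_of_hasDeriv_right_of_le hxε0.le hcont1
        (fun s hs => (hd1 s hs).hasDerivWithinAt)
        ((intervalIntegrable_iff_integrableOn_Ioc_of_le hxε0.le).2 hint1)
    -- F₂ on Ioi (x+ε)
    have hd2 : ∀ s ∈ Ici (x + ε), HasDerivAt F₂ ((Real.sqrt s)⁻¹ / (x - s)) s := by
      intro s hs
      have hs0 : 0 < s := by have := hs.out; linarith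
      have hsq : 0 < Real.sqrt s := Real.sqrt_pos.2 hs0
      have hub : b < Real.sqrt s := by
        rw [hb]; exact Real.sqrt_lt_sqrt hx.le (by have := hs.out; linarith)
      have h1 : HasDerivAt (fun t => Real.sqrt t + b) (1 / (2 * Real.sqrt s)) s :=
        (Real.hasDerivAt_sqrt hs0.ne').add_const b
      have hl1 : HasDerivAt (fun t => Real.log (Real.sqrt t + b))
          ((Real.sqrt s + b)⁻¹ * (1 / (2 * Real.sqrt s))) s :=
        (Real.hasDerivAt_log (by positivity)).comp s h1
      have h2 : HasDerivAt (fun t => Real.sqrt t - b) (1 / (2 * Real.sqrt s)) s :=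
        (Real.hasDerivAt_sqrt hs0.ne').sub_const b
      have hl2 : HasDerivAt (fun t => Real.log (Real.sqrt t - b))
          ((Real.sqrt s - b)⁻¹ * (1 / (2 * Real.sqrt s))) s :=
        (Real.hasDerivAt_log (by linarith)).comp s h2
      have h4 := (hl1.sub hl2).const_mul b⁻¹
      refine h4.congr_deriv ?_
      symm
      have hss : Real.sqrt s ^ 2 = s := Real.sq_sqrt hs0.le
      have hxs : x - s ≠ 0 := by nlinarith
      have hbu : Real.sqrt s - b ≠ 0 := by linarith
      have hbu2 : Real.sqrt s + b ≠ 0 := by positivity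
      field_simp
      linear_combination (-2*b) * hb2 + (2*b) * hss
    have hneg2 : ∀ s ∈ Ioi (x + ε), (Real.sqrt s)⁻¹ / (x - s) ≤ 0 := by
      intro s hs
      apply div_nonpos_of_nonneg_of_nonpos (inv_nonneg.2 (Real.sqrt_nonneg s))
      have := hs.out; linarith
    have htend2 : Tendsto F₂ atTop (𝓝 0) := by
      have haux : Tendsto (fun t : ℝ => Real.log (t + b) - Real.log (t - b)) atTop (𝓝 0) := by
        have h1 : Tendsto (fun t : ℝ => (t + b) / (t - b)) atTop (𝓝 1) := by
          have h2 : Tendsto (fun t : ℝ => 1 + 2 * b / (t - b)) atTop (𝓝 (1 + 0)) := by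
            apply tendsto_const_nhds.add
            exact Tendsto.div_atTop tendsto_const_nhds
              (tendsto_atTop_add_const_right atTop (-b) tendsto_id)
          rw [add_zero] at h2
          apply h2.congr'
          filter_upwards [eventually_gt_atTop b] with t ht
          have : t - b ≠ 0 := by linarith
          field_simp
          ring
        have h3 := ((Real.continuousAt_log one_ne_zero).tendsto).comp h1
        rw [Real.log_one] at h3
        apply h3.congr'
        filter_upwards [eventually_gt_atTop b] with t ht
        have h5 : (0:ℝ) < t + b := by linarith
        have h6 : (0:ℝ) < t - b := by linarith
        simp only [Function.comp]
        rw [Real.log_div h5.ne' h6.ne']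
      have := (haux.comp sqrt_tendsto_atTop).const_mul b⁻¹
      rw [mul_zero] at this
      exact this
    have hval2 : ∫ s in Set.Ioi (x + ε), (Real.sqrt s)⁻¹ / (x - s) = 0 - F₂ (x + ε) :=
      integral_Ioi_of_hasDerivAt_of_nonpos' hd2 hneg2 htend2
    have hint2 : IntegrableOn (fun s => (Real.sqrt s)⁻¹ / (x - s)) (Ioi (x + ε)) :=
      integrableOn_Ioi_deriv_of_nonpos' hd2 hneg2 htend2
    -- set splitting
    have hset : {s : ℝ | 0 < s ∧ ε < |s - x|} = Ioo 0 (x - ε) ∪ Ioi (x + ε) := by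
      ext s
      simp only [mem_setOf_eq, mem_union, mem_Ioo, mem_Ioi, lt_abs]
      constructor
      · rintro ⟨hs0, h | h⟩
        · right; linarith
        · left; exact ⟨hs0, by linarith⟩
      · rintro (⟨h1, h2⟩ | h)
        · exact ⟨h1, Or.inr (by linarith)⟩
        · exact ⟨by linarith, Or.inl (by linarith)⟩
    have hdisj : Disjoint (Ioo (0:ℝ) (x - ε)) (Ioi (x + ε)) := by
      rw [Set.disjoint_left]
      rintro s ⟨_, h2⟩ h3
      exact absurd (h3.out) (by linarith)
    rw [hset, setIntegral_union hdisj measurableSet_Ioi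
      (hint1.mono_set Ioo_subset_Ioc_self) hint2, hval1, hval2]
    -- now the algebraic identity
    have hsx0 : Real.sqrt (0:ℝ) = 0 := Real.sqrt_zero
    have hF10 : F₁ 0 = 0 := by simp [hF₁]
    set u := Real.sqrt (x - ε) with hu
    set v := Real.sqrt (x + ε) with hv
    have hu2 : u ^ 2 = x - ε := Real.sq_sqrt hxε0.le
    have hv2 : v ^ 2 = x + ε := Real.sq_sqrt (by linarith)
    have hu0 : 0 < u := Real.sqrt_pos.2 hxε0
    have hv0 : 0 < v := Real.sqrt_pos.2 (by linarith)
    have hub : u < b := by rw [hu, hb]; exact Real.sqrt_lt_sqrt hxε0.le (by linarith)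
    have hvb : b < v := by rw [hv, hb]; exact Real.sqrt_lt_sqrt hx.le (by linarith)
    have e1 : b - u = ε / (b + u) := by
      rw [eq_div_iff (by positivity)]; nlinarith
    have e2 : v - b = ε / (v + b) := by
      rw [eq_div_iff (by positivity)]; nlinarith
    have l1 : Real.log (b - u) = Real.log ε - Real.log (b + u) := by
      rw [e1, Real.log_div hε0.ne' (by positivity)]
    have l2 : Real.log (v - b) = Real.log ε - Real.log (v + b) := by
      rw [e2, Real.log_div hε0.ne' (by positivity)]
    have hcomm : Real.log (v + b) = Real.log (b + v) := by rw [add_comm]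
    simp only [hF₁, hF₂, Real.sqrt_zero, add_zero, sub_zero]
    rw [l1, l2, hcomm]
    ring
  -- conclude by continuity
  have glim : Tendsto (fun ε : ℝ =>
      2 * b⁻¹ * (Real.log (b + Real.sqrt (x - ε)) - Real.log (b + Real.sqrt (x + ε))))
      (𝓝[>] 0) (𝓝 0) := by
    have hc : ContinuousAt (fun ε : ℝ =>
        2 * b⁻¹ * (Real.log (b + Real.sqrt (x - ε)) - Real.log (b + Real.sqrt (x + ε)))) 0 := by
      have hbx : b + Real.sqrt x ≠ 0 := by positivity
      apply ContinuousAt.mul continuousAt_const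
      apply ContinuousAt.sub
      · apply ContinuousAt.log
        · exact (continuous_const.add (Real.continuous_sqrt.comp
            (continuous_const.sub continuous_id))).continuousAt
        · show b + Real.sqrt (x - 0) ≠ 0
          rw [sub_zero]; exact hbx
      · apply ContinuousAt.log
        · exact (continuous_const.add (Real.continuous_sqrt.comp
            (continuous_const.add continuous_id))).continuousAt
        · show b + Real.sqrt (x + 0) ≠ 0
          rw [add_zero]; exact hbx
    have := hc.tendsto
    simp only [sub_zero, add_zero, sub_self, mul_zero] at this
    exact this.mono_left nhdsWithin_le_nhds
  apply glim.congr'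
  filter_upwards [Ioo_mem_nhdsGT_of_mem (by constructor <;> simp [hx] : (0:ℝ) ∈ Ico 0 x)]
    with ε hε
  exact (key ε hε).symm

/-- Core of Lemma 6.1 (L3) (Hilbert transform of the inverse square root):
(i) for `x < 0`, `∫_0^∞ s^{−1/2}/(x−s) ds = −π(−x)^{−1/2}` (the integral being
convergent); (ii) for `x > 0`, the principal value
`lim_{ε→0⁺} ∫_{{s>0, |s−x|>ε}} s^{−1/2}/(x−s) ds = 0`.  Consequently
`H(s ↦ s₊^{−1/2})(x) = −x₋^{−1/2}` for all `x ≠ 0`, where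
`Hg(x) = (1/π) pv ∫ g(s)/(x−s) ds`. -/
theorem hilbert_of_inv_sqrt :
    (∀ x : ℝ, x < 0 →
      IntegrableOn (fun s : ℝ => (Real.sqrt s)⁻¹ / (x - s)) (Set.Ioi 0) volume ∧
        ∫ s in Set.Ioi (0:ℝ), (Real.sqrt s)⁻¹ / (x - s) = -π * (Real.sqrt (-x))⁻¹) ∧
    (∀ x : ℝ, 0 < x →
      Filter.Tendsto
        (fun ε : ℝ => ∫ s in {s : ℝ | 0 < s ∧ ε < |s - x|}, (Real.sqrt s)⁻¹ / (x - s))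
        (nhdsWithin 0 (Set.Ioi 0)) (nhds 0)) ∧
    (∀ x : ℝ, x ≠ 0 →
      Filter.Tendsto
        (fun ε : ℝ => (1 / π) * ∫ s in {s : ℝ | 0 < s ∧ ε < |s - x|}, (Real.sqrt s)⁻¹ / (x - s))
        (nhdsWithin 0 (Set.Ioi 0))
        (nhds (if x < 0 then -(Real.sqrt (-x))⁻¹ else 0))) := by
  refine ⟨fun x hx => part1 x hx, fun x hx => part2 x hx, fun x hx => ?_⟩
  rcases lt_or_gt_of_ne hx with h | h
  · -- x < 0 : the set is eventually Ioi 0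
    rw [if_pos h]
    have hset : ∀ ε ∈ Ioo (0:ℝ) (-x), {s : ℝ | 0 < s ∧ ε < |s - x|} = Ioi (0:ℝ) := by
      intro ε hε
      ext s
      simp only [mem_setOf_eq, mem_Ioi]
      constructor
      · exact fun hs => hs.1
      · intro hs
        refine ⟨hs, ?_⟩
        rw [abs_of_pos (by linarith)]
        linarith [hε.2]
    have hconst : ∀ ε ∈ Ioo (0:ℝ) (-x),
        (1 / π) * ∫ s in {s : ℝ | 0 < s ∧ ε < |s - x|}, (Real.sqrt s)⁻¹ / (x - s)
          = -(Real.sqrt (-x))⁻¹ := by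
      intro ε hε
      rw [hset ε hε, (part1 x h).2]
      field_simp
    apply Filter.Tendsto.congr' _ tendsto_const_nhds
    filter_upwards [Ioo_mem_nhdsGT_of_mem
      (by constructor <;> simp [neg_pos.2 h] : (0:ℝ) ∈ Ico 0 (-x))] with ε hε
    exact (hconst ε hε).symm
  · rw [if_neg (by linarith)]
    have := (part2 x h).const_mul (1 / π)
    rw [mul_zero] at this
    exact this
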